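/- Let G be a graph, and suppose for each vertex i and each neighbor j a weight p_i^j ∈ [0,1] is given with Σ_{j ∈ N(i)} p_i^j ≤ 1 (subunital weights). Then the graph energy satisfies E(G) ≥ 2 Σ_{(i,j) ∈ E(G)} √(p_i^j · p_j^i). -/

import Mathlib

open Finset Matrix

noncomputable section

variable {V : Type*} [Fintype V] [DecidableEq V]

/-- The adjacency matrix of a simple graph is Hermitian (over ℝ). -/
theorem SimpleGraph.isHermitian_adjMatrix' (G : SimpleGraph V) [DecidableRel G.Adj] :
    (G.adjMatrix ℝ).IsHermitian := by
  rw [Matrix.IsHermitian, Matrix.conjTranspose_eq_transpose_of_trivial]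
  exact G.isSymm_adjMatrix

/-- The energy of a graph: the sum of the absolute values of the
eigenvalues of its adjacency matrix. -/
def SimpleGraph.energy (G : SimpleGraph V) [DecidableRel G.Adj] : ℝ :=
  ∑ k, |G.isHermitian_adjMatrix'.eigenvalues k|

/-- The Randić index of a graph: the sum over the (unordered) edges `(i,j)`
of `1/√(deg i · deg j)`. -/
def SimpleGraph.randic (G : SimpleGraph V) [DecidableRel G.Adj] : ℝ :=
  ∑ e ∈ G.edgeFinset,
    Sym2.lift ⟨fun i j => 1 / Real.sqrt (G.degree i * G.degree j),
      fun i j => by simp [mul_comm]⟩ e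

end

lemma sum_nbrs_eq_two_mul {V : Type*} [Fintype V] [DecidableEq V]
    (G : SimpleGraph V) [DecidableRel G.Adj]
    (f : V → V → ℝ) (hf : ∀ i j, f i j = f j i) :
    ∑ i, ∑ j ∈ G.neighborFinset i, f i j
      = 2 * ∑ e ∈ G.edgeFinset, Sym2.lift ⟨f, hf⟩ e := by
  have hdart : ∑ d : G.Dart, f d.fst d.snd = ∑ i, ∑ j ∈ G.neighborFinset i, f i j := by
    rw [← Finset.sum_fiberwise univ (fun d : G.Dart => d.fst) (fun d => f d.fst d.snd)]
    refine Finset.sum_congr rfl fun v _ => ?_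
    have h1 : ({d : G.Dart | d.fst = v} : Finset _) = univ.image (G.dartOfNeighborSet v) :=
      SimpleGraph.dart_fst_fiber G v
    rw [show (univ.filter fun d : G.Dart => d.fst = v) = univ.image (G.dartOfNeighborSet v) from h1,
      Finset.sum_image (fun a _ b _ h => G.dartOfNeighborSet_injective v h)]
    rw [Finset.sum_subtype (G.neighborFinset v) (fun j => G.mem_neighborFinset v j)
      (fun j => f v j)]
    rfl
  have hedge : ∑ d : G.Dart, f d.fst d.snd
      = ∑ e ∈ G.edgeFinset, 2 * Sym2.lift ⟨f, hf⟩ e := by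
    rw [← Finset.sum_fiberwise_of_maps_to (g := fun d : G.Dart => d.edge)
      (fun d _ => (SimpleGraph.mem_edgeFinset).2 d.edge_mem) (fun d => f d.fst d.snd)]
    refine Finset.sum_congr rfl fun e he => ?_
    rw [SimpleGraph.mem_edgeFinset] at he
    induction e with
    | _ v w =>
      have hadj : G.Adj v w := he
      let d : G.Dart := ⟨(v, w), hadj⟩
      have hfib : (univ.filter fun d' : G.Dart => d'.edge = s(v, w)) = {d, d.symm} := by
        have := d.edge_fiber
        exact this
      rw [hfib, Finset.sum_insert (by simp [Finset.mem_singleton]; exact d.symm_ne.symm),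
        Finset.sum_singleton]
      simp [d, SimpleGraph.Dart.symm, hf w v]
      ring
  rw [← hdart, hedge, Finset.mul_sum]

private lemma stmt2_aux {V : Type*} [Fintype V] [DecidableEq V]
    (G : SimpleGraph V) [DecidableRel G.Adj]
    (p : V → V → ℝ)
    (hp0 : ∀ i j, G.Adj i j → 0 ≤ p i j)
    (hp1 : ∀ i j, G.Adj i j → p i j ≤ 1)
    (hsum : ∀ i, ∑ j ∈ G.neighborFinset i, p i j ≤ 1) :
    ∑ i, ∑ j ∈ G.neighborFinset i, Real.sqrt (p i j * p j i) ≤ G.energy := by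
  rw [SimpleGraph.energy]
  classical
  set A : Matrix V V ℝ := G.adjMatrix ℝ with hAdef
  have hA : A.IsHermitian := G.isHermitian_adjMatrix'
  set B : Matrix V V ℝ := Matrix.of fun i j =>
    if G.Adj i j then Real.sqrt (p i j * p j i) else 0 with hBdef
  set U : Matrix V V ℝ := (Matrix.IsHermitian.eigenvectorUnitary hA : Matrix V V ℝ) with hUdef
  have hUU : star U * U = 1 := by
    simpa [hUdef] using (Matrix.mem_unitaryGroup_iff').mp (Matrix.IsHermitian.eigenvectorUnitary hA).2
  have hUU' : U * star U = 1 := by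
    simpa [hUdef] using (Matrix.mem_unitaryGroup_iff).mp (Matrix.IsHermitian.eigenvectorUnitary hA).2
  -- step 1: LHS = trace (A * B)
  have step1 : ∑ i, ∑ j ∈ G.neighborFinset i, Real.sqrt (p i j * p j i) = (A * B).trace := by
    rw [Matrix.trace]
    refine Finset.sum_congr rfl fun i _ => ?_
    simp only [Matrix.diag, Matrix.mul_apply, hAdef, SimpleGraph.adjMatrix_apply, hBdef,
      Matrix.of_apply, ite_mul, one_mul, zero_mul]
    rw [SimpleGraph.neighborFinset_eq_filter, Finset.sum_filter]
    refine Finset.sum_congr rfl fun j _ => ?_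
    by_cases h : G.Adj i j
    · simp [h, h.symm, mul_comm]
    · simp [h]
  -- step 2: trace (A * B) = ∑ k, λ k * (star U * B * U) k k
  have hdiag : star U * A * U = Matrix.diagonal (hA.eigenvalues) := by
    have := hA.conjStarAlgAut_star_eigenvectorUnitary
    simpa [hUdef, Unitary.conjStarAlgAut_apply, Function.comp_def] using this
  have step2 : (A * B).trace = ∑ k, hA.eigenvalues k * (star U * B * U) k k := by
    have h1 : (A * B).trace = ((star U * A * U) * (star U * B * U)).trace := by
      have : (star U * A * U) * (star U * B * U) = star U * (A * B) * U := by
        rw [show star U * A * U * (star U * B * U) = star U * A * (U * star U) * B * U by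
          noncomm_ring]
        rw [hUU']
        noncomm_ring
      rw [this, Matrix.trace_mul_cycle, ← Matrix.mul_assoc, hUU', Matrix.one_mul]
    rw [h1, hdiag, Matrix.trace]
    refine Finset.sum_congr rfl fun k _ => ?_
    simp [Matrix.diagonal_mul, Matrix.diag]
  -- step 3: each diagonal entry of star U * B * U has absolute value ≤ 1
  have step3 : ∀ k, |(star U * B * U) k k| ≤ 1 := by
    intro k
    set x : V → ℝ := fun i => U i k with hxdef
    have hx1 : ∑ i, x i ^ 2 = 1 := by
      have := congrFun (congrFun hUU k) k
      simp only [Matrix.mul_apply, Matrix.one_apply_eq, Matrix.star_apply, star_trivial] at this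
      rw [← this]
      exact Finset.sum_congr rfl fun i _ => by rw [sq]
    have hMkk : (star U * B * U) k k = ∑ i, ∑ j, x i * B i j * x j := by
      rw [Matrix.mul_apply]
      simp only [Matrix.mul_apply, Matrix.star_apply, star_trivial, Finset.sum_mul]
      rw [Finset.sum_comm]
    rw [hMkk]
    have hsym : ∑ i, ∑ j, (if G.Adj i j then p j i * x j ^ 2 else 0)
        = ∑ i, ∑ j, (if G.Adj i j then p i j * x i ^ 2 else 0) := by
      rw [Finset.sum_comm]
      exact Finset.sum_congr rfl fun i _ => Finset.sum_congr rfl fun j _ =>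
        if_congr (G.adj_comm j i) rfl rfl
    calc |∑ i, ∑ j, x i * B i j * x j| ≤ ∑ i, ∑ j, |x i * B i j * x j| := by
          refine (Finset.abs_sum_le_sum_abs _ _).trans ?_
          exact Finset.sum_le_sum fun i _ => Finset.abs_sum_le_sum_abs _ _
      _ ≤ ∑ i, ∑ j, (if G.Adj i j then (p i j * x i ^ 2 + p j i * x j ^ 2) / 2 else 0) := by
          refine Finset.sum_le_sum fun i _ => Finset.sum_le_sum fun j _ => ?_
          by_cases h : G.Adj i j
          · have h0i := hp0 i j h
            have h0j := hp0 j i h.symm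
            simp only [hBdef, Matrix.of_apply, h, if_true]
            have key : |x i * Real.sqrt (p i j * p j i) * x j|
                = (Real.sqrt (p i j) * |x i|) * (Real.sqrt (p j i) * |x j|) := by
              rw [abs_mul, abs_mul, abs_of_nonneg (Real.sqrt_nonneg _), Real.sqrt_mul h0i]
              ring
            rw [key]
            have h2 := two_mul_le_add_sq (Real.sqrt (p i j) * |x i|) (Real.sqrt (p j i) * |x j|)
            have ha : (Real.sqrt (p i j) * |x i|) ^ 2 = p i j * x i ^ 2 := by
              rw [mul_pow, Real.sq_sqrt h0i, sq_abs]
            have hb : (Real.sqrt (p j i) * |x j|) ^ 2 = p j i * x j ^ 2 := by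
              rw [mul_pow, Real.sq_sqrt h0j, sq_abs]
            rw [ha, hb] at h2
            linarith
          · simp [hBdef, h]
      _ = ∑ i, ∑ j, (if G.Adj i j then p i j * x i ^ 2 else 0) := by
          have hpt : ∀ i j : V, (if G.Adj i j then (p i j * x i ^ 2 + p j i * x j ^ 2) / 2 else 0)
              = ((if G.Adj i j then p i j * x i ^ 2 else 0)
                  + (if G.Adj i j then p j i * x j ^ 2 else 0)) / 2 := by
            intro i j; by_cases h : G.Adj i j <;> simp [h]
          simp_rw [hpt, ← Finset.sum_div, Finset.sum_add_distrib]
          rw [hsym]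
          ring
      _ = ∑ i, x i ^ 2 * ∑ j ∈ G.neighborFinset i, p i j := by
          refine Finset.sum_congr rfl fun i _ => ?_
          rw [SimpleGraph.neighborFinset_eq_filter, Finset.sum_filter, Finset.mul_sum]
          refine Finset.sum_congr rfl fun j _ => ?_
          by_cases h : G.Adj i j <;> simp [h] <;> ring
      _ ≤ ∑ i, x i ^ 2 := by
          refine Finset.sum_le_sum fun i _ => ?_
          exact mul_le_of_le_one_right (sq_nonneg (x i)) (hsum i)
      _ = 1 := hx1
  rw [step1, step2]
  calc ∑ k, hA.eigenvalues k * (star U * B * U) k k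
      ≤ ∑ k, |hA.eigenvalues k * (star U * B * U) k k| :=
        Finset.sum_le_sum fun k _ => le_abs_self _
    _ ≤ ∑ k, |hA.eigenvalues k| := Finset.sum_le_sum fun k _ => by
        rw [abs_mul]
        exact mul_le_of_le_one_right (abs_nonneg _) (step3 k)

/-- If to every vertex `i` and every neighbour `j` of `i` a weight `p i j ∈ [0,1]` is
assigned, with the weights at each vertex summing to at most `1` (subunital weights),
then `E(G) ≥ 2 ∑_{(i,j) ∈ E(G)} √(p i j · p j i)`. -/
theorem stmt2 {V : Type*} [Fintype V] [DecidableEq V]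
    (G : SimpleGraph V) [DecidableRel G.Adj]
    (p : V → V → ℝ)
    (hp0 : ∀ i j, G.Adj i j → 0 ≤ p i j)
    (hp1 : ∀ i j, G.Adj i j → p i j ≤ 1)
    (hsum : ∀ i, ∑ j ∈ G.neighborFinset i, p i j ≤ 1) :
    2 * ∑ e ∈ G.edgeFinset,
        Sym2.lift ⟨fun i j => Real.sqrt (p i j * p j i),
          fun i j => by simp [mul_comm]⟩ e
      ≤ G.energy := by
  rw [← sum_nbrs_eq_two_mul G (fun i j => Real.sqrt (p i j * p j i))
    (fun i j => by simp [mul_comm])]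
  exact stmt2_aux G p hp0 hp1 hsum
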